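/- The correspondence λ = (i₁ ≥ i₂ ≥ ... ≥ i_m) ⊢ k (a partition of k, 0 ≤ k ≤ g-1) ↦ λ' = (2i₁ + g - 1 - k, 2i₂, ..., 2i_m, 1, 1, ..., 1) with g-1-k ones, yields a partition of 2g-2 for every such λ; moreover the map λ ↦ λ' is injective on the disjoint union of partitions of k for 0 ≤ k ≤ g-1. -/
import Mathlib


lemma multiset_sup_mem {s : Multiset ℕ} (h : s ≠ 0) : s.sup ∈ s := by
  induction s using Multiset.induction with
  | empty => simp at h
  | cons a s ih =>
    rw [Multiset.sup_cons]
    rcases eq_or_ne s 0 with rfl | hs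
    · simp
    · rcases le_total a s.sup with h1 | h1
      · rw [sup_eq_right.2 h1]; exact Multiset.mem_cons_of_mem (ih hs)
      · rw [sup_eq_left.2 h1]; exact Multiset.mem_cons_self a s

lemma parts_eq_zero {k : ℕ} (hk : k = 0) (P : Nat.Partition k) : P.parts = 0 := by
  subst hk
  exact Multiset.eq_zero_of_forall_notMem fun x hx =>
    (P.parts_pos hx).ne' <| Multiset.sum_eq_zero_iff.1 P.parts_sum _ hx

lemma parts_cons {k : ℕ} (hk : k ≠ 0) (P : Nat.Partition k) :
    P.parts = P.parts.sup ::ₘ P.parts.erase P.parts.sup := by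
  have hne : P.parts ≠ 0 := by
    intro h0
    exact hk (P.parts_sum.symm.trans (by rw [h0]; simp))
  exact (Multiset.cons_erase (multiset_sup_mem hne)).symm

lemma sup_add_erase {k : ℕ} (P : Nat.Partition k) :
    P.parts.sup + (P.parts.erase P.parts.sup).sum = k := by
  rcases eq_or_ne k 0 with rfl | hk
  · rw [parts_eq_zero rfl P]; simp
  · conv_rhs => rw [← P.parts_sum, parts_cons hk P]
    simp

lemma sup_pos {k : ℕ} (hk : k ≠ 0) (P : Nat.Partition k) : 1 ≤ P.parts.sup := by
  have hne : P.parts ≠ 0 := by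
    intro h0
    exact hk (P.parts_sum.symm.trans (by rw [h0]; simp))
  exact P.parts_pos (multiset_sup_mem hne)


/-- The map `λ ↦ λ'`: for a partition `λ ⊢ k` (with largest part `i₁ = λ.parts.sup`),
`λ' = (2i₁ + g - 1 - k, 2i₂, …, 2i_m, 1, …, 1)` with `g - 1 - k` ones appended
(for `k = 0` and `λ` empty this gives `(g-1, 1^{g-1})`). -/
def lamPrime (g : ℕ) (p : Σ k : Fin g, Nat.Partition (k : ℕ)) : Multiset ℕ :=
  (2 * p.2.parts.sup + (g - 1 - (p.1 : ℕ))) ::ₘ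
      (p.2.parts.erase p.2.parts.sup).map (fun x => 2 * x) +
    Multiset.replicate (g - 1 - (p.1 : ℕ)) 1

/-- **The correspondence `λ ↦ λ'`.** For every `0 ≤ k ≤ g - 1` and every partition `λ` of
`k`, the multiset `λ'` is a partition of `2g - 2` (total sum `2g - 2`, all parts positive),
and the map `λ ↦ λ'` is injective on the disjoint union of the sets of partitions of `k`
for `0 ≤ k ≤ g - 1`. -/
theorem lamPrime_partition_and_injective (g : ℕ) (hg : 2 ≤ g) :
    (∀ p : Σ k : Fin g, Nat.Partition (k : ℕ),
        (lamPrime g p).sum = 2 * g - 2 ∧ ∀ x ∈ lamPrime g p, 0 < x) ∧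
      Function.Injective (lamPrime g) := by
  constructor
  · rintro ⟨⟨k, hk⟩, P⟩
    simp only [lamPrime, Fin.val_mk]
    have hsa : P.parts.sup + (P.parts.erase P.parts.sup).sum = k := sup_add_erase P
    constructor
    · rw [Multiset.sum_add, Multiset.sum_cons, Multiset.sum_replicate]
      have hm : ((P.parts.erase P.parts.sup).map (fun x => 2 * x)).sum
          = 2 * (P.parts.erase P.parts.sup).sum := by
        induction P.parts.erase P.parts.sup using Multiset.induction with
        | empty => simp
        | cons a s ih => simp [ih, mul_add]
      simp only [hm, smul_eq_mul]
      omega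
    · intro x hx
      rcases Multiset.mem_add.1 hx with hx | hx
      · rcases Multiset.mem_cons.1 hx with rfl | hx
        · rcases eq_or_ne k 0 with hk0 | hk0
          · omega
          · have := sup_pos hk0 P; omega
        · obtain ⟨y, hy, rfl⟩ := Multiset.mem_map.1 hx
          have := P.parts_pos (Multiset.mem_of_mem_erase hy); omega
      · rw [Multiset.eq_of_mem_replicate hx]; omega
  · rintro ⟨⟨k, hk⟩, P⟩ ⟨⟨l, hl⟩, Q⟩ h
    simp only [lamPrime, Fin.val_mk] at h
    have hsaP : P.parts.sup + (P.parts.erase P.parts.sup).sum = k := sup_add_erase P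
    have hsaQ : Q.parts.sup + (Q.parts.erase Q.parts.sup).sum = l := sup_add_erase Q
    have hP0 : P.parts.sup = 0 → k = 0 := by
      intro h0; by_contra hk0; have := sup_pos hk0 P; omega
    have hQ0 : Q.parts.sup = 0 → l = 0 := by
      intro h0; by_contra hl0; have := sup_pos hl0 Q; omega
    have hEne1 : (1 : ℕ) ∉ (P.parts.erase P.parts.sup).map (fun x => 2 * x) := by
      intro hmem
      obtain ⟨y, hy, hxy⟩ := Multiset.mem_map.1 hmem
      have := P.parts_pos (Multiset.mem_of_mem_erase hy); omega
    have hFne1 : (1 : ℕ) ∉ (Q.parts.erase Q.parts.sup).map (fun x => 2 * x) := by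
      intro hmem
      obtain ⟨y, hy, hxy⟩ := Multiset.mem_map.1 hmem
      have := Q.parts_pos (Multiset.mem_of_mem_erase hy); omega
    by_cases hA : 2 * P.parts.sup + (g - 1 - k) = 1
    · have hs0 : P.parts.sup = 0 := by omega
      have hk0 : k = 0 := hP0 hs0
      have heP : P.parts.erase P.parts.sup = 0 := by
        rw [parts_eq_zero hk0 P]; rfl
      have ht1 : g - 1 - k = 1 := by omega
      rw [heP, hA, ht1] at h
      have hb : 2 * Q.parts.sup + (g - 1 - l)
          ∈ (2 * Q.parts.sup + (g - 1 - l)) ::ₘ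
            (Q.parts.erase Q.parts.sup).map (fun x => 2 * x) +
            Multiset.replicate (g - 1 - l) 1 :=
        Multiset.mem_add.2 (Or.inl (Multiset.mem_cons_self _ _))
      rw [← h] at hb
      simp only [Multiset.map_zero, Multiset.replicate_one, Multiset.mem_add,
        Multiset.mem_cons, Multiset.mem_singleton, Multiset.notMem_zero, or_false] at hb
      have hB : 2 * Q.parts.sup + (g - 1 - l) = 1 := by omega
      have hs0' : Q.parts.sup = 0 := by omega
      have hl0 : l = 0 := hQ0 hs0'
      obtain rfl : k = l := by omega
      have hparts : P.parts = Q.parts := by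
        rw [parts_eq_zero hk0 P, parts_eq_zero hl0 Q]
      exact Sigma.ext rfl (heq_of_eq (Nat.Partition.ext hparts))
    · by_cases hB : 2 * Q.parts.sup + (g - 1 - l) = 1
      · have hs0 : Q.parts.sup = 0 := by omega
        have hl0 : l = 0 := hQ0 hs0
        have heQ : Q.parts.erase Q.parts.sup = 0 := by
          rw [parts_eq_zero hl0 Q]; rfl
        have ht1 : g - 1 - l = 1 := by omega
        rw [heQ, hB, ht1] at h
        have hb : 2 * P.parts.sup + (g - 1 - k)
            ∈ (2 * P.parts.sup + (g - 1 - k)) ::ₘ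
              (P.parts.erase P.parts.sup).map (fun x => 2 * x) +
              Multiset.replicate (g - 1 - k) 1 :=
          Multiset.mem_add.2 (Or.inl (Multiset.mem_cons_self _ _))
        rw [h] at hb
        simp only [Multiset.map_zero, Multiset.replicate_one, Multiset.mem_add,
          Multiset.mem_cons, Multiset.mem_singleton, Multiset.notMem_zero, or_false] at hb
        omega
      · -- main case: both head parts ≠ 1
        have hcount := congrArg (Multiset.count 1) h
        have h1 : Multiset.count 1 ((2 * P.parts.sup + (g - 1 - k)) ::ₘ
            (P.parts.erase P.parts.sup).map (fun x => 2 * x)) = 0 := by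
          rw [Multiset.count_cons_of_ne (by omega), Multiset.count_eq_zero.2 hEne1]
        have h1' : Multiset.count 1 ((2 * Q.parts.sup + (g - 1 - l)) ::ₘ
            (Q.parts.erase Q.parts.sup).map (fun x => 2 * x)) = 0 := by
          rw [Multiset.count_cons_of_ne (by omega), Multiset.count_eq_zero.2 hFne1]
        rw [Multiset.count_add, Multiset.count_add, h1, h1',
          Multiset.count_replicate_self, Multiset.count_replicate_self] at hcount
        obtain rfl : k = l := by omega
        have h' : (2 * P.parts.sup + (g - 1 - k)) ::ₘ
              (P.parts.erase P.parts.sup).map (fun x => 2 * x)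
            = (2 * Q.parts.sup + (g - 1 - k)) ::ₘ
              (Q.parts.erase Q.parts.sup).map (fun x => 2 * x) :=
          add_right_cancel h
        have hsupL : ((2 * P.parts.sup + (g - 1 - k)) ::ₘ
            (P.parts.erase P.parts.sup).map (fun x => 2 * x)).sup
            = 2 * P.parts.sup + (g - 1 - k) := by
          rw [Multiset.sup_cons]
          refine sup_eq_left.2 (Multiset.sup_le.2 fun x hx => ?_)
          obtain ⟨y, hy, rfl⟩ := Multiset.mem_map.1 hx
          have := Multiset.le_sup (Multiset.mem_of_mem_erase hy)
          omega
        have hsupR : ((2 * Q.parts.sup + (g - 1 - k)) ::ₘ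
            (Q.parts.erase Q.parts.sup).map (fun x => 2 * x)).sup
            = 2 * Q.parts.sup + (g - 1 - k) := by
          rw [Multiset.sup_cons]
          refine sup_eq_left.2 (Multiset.sup_le.2 fun x hx => ?_)
          obtain ⟨y, hy, rfl⟩ := Multiset.mem_map.1 hx
          have := Multiset.le_sup (Multiset.mem_of_mem_erase hy)
          omega
        have hab : 2 * P.parts.sup + (g - 1 - k) = 2 * Q.parts.sup + (g - 1 - k) := by
          rw [← hsupL, h', hsupR]
        have hss : P.parts.sup = Q.parts.sup := by omega
        rw [hab] at h'
        have hEF : (P.parts.erase P.parts.sup).map (fun x => 2 * x)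
            = (Q.parts.erase Q.parts.sup).map (fun x => 2 * x) :=
          (Multiset.cons_inj_right _).1 h'
        have herase : P.parts.erase P.parts.sup = Q.parts.erase Q.parts.sup :=
          Multiset.map_injective (fun a b hab => by omega) hEF
        have hparts : P.parts = Q.parts := by
          rcases eq_or_ne k 0 with hk0 | hk0
          · rw [parts_eq_zero hk0 P, parts_eq_zero hk0 Q]
          · rw [parts_cons hk0 P, parts_cons hk0 Q, herase, hss]
        exact Sigma.ext rfl (heq_of_eq (Nat.Partition.ext hparts))
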